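/- Let a > 0, e ∈ [0,1), and E₁, E₂ ∈ ℝ with 0 ≤ E₂ − E₁ ≤ 2π. Let P(E) = (a(cos E − e), a√(1−e²) sin E) ∈ ℝ², and set r₁ = ‖P(E₁)‖, r₂ = ‖P(E₂)‖, d = ‖P(E₂) − P(E₁)‖. Then there exist β, γ ∈ ℝ such that sin²(β/2) = (r₁ + r₂ + d)/(4a), sin²(γ/2) = (r₁ + r₂ − d)/(4a), 0 ≤ β − γ ≤ 2π, and (E₂ − e sin E₂) − (E₁ − e sin E₁) = β − γ − (sin β − sin γ). -/

import Mathlib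

open Real

/-- Elliptic position at eccentric anomaly `E`, with the attracting focus at the origin. -/
noncomputable def ellP (a e E : ℝ) : EuclideanSpace ℝ (Fin 2) :=
  (WithLp.equiv 2 (Fin 2 → ℝ)).symm
    ![a * (Real.cos E - e), a * Real.sqrt (1 - e ^ 2) * Real.sin E]

lemma sin_half_sq (x : ℝ) : Real.sin (x/2)^2 = (1 - Real.cos x)/2 := by
  have h := Real.cos_sq (x/2)
  have h2 := Real.sin_sq_add_cos_sq (x/2)
  rw [show 2*(x/2) = x by ring] at h
  linarith

lemma norm_ellP (a e E : ℝ) (ha : 0 < a) (he0 : 0 ≤ e) (he1 : e < 1) :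
    ‖ellP a e E‖ = a * (1 - e * Real.cos E) := by
  have h1 : (0:ℝ) ≤ 1 - e^2 := by nlinarith
  rw [ellP, EuclideanSpace.norm_eq]
  simp only [Fin.sum_univ_two, Matrix.cons_val_zero, Matrix.cons_val_one, Matrix.head_cons,
    WithLp.equiv_symm_apply, PiLp.toLp_apply, Real.norm_eq_abs, sq_abs]
  have hs := Real.sq_sqrt h1
  have hc : (a * (cos E - e)) ^ 2 + (a * √(1 - e ^ 2) * sin E) ^ 2
      = (a * (1 - e * cos E))^2 := by
    linear_combination (a^2 * Real.sin E^2) * hs + (a^2*(1-e^2)) * (Real.sin_sq_add_cos_sq E)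
  have hec : e * cos E ≤ 1 := by nlinarith [Real.cos_le_one E]
  rw [hc, Real.sqrt_sq (mul_nonneg ha.le (by linarith))]

lemma chord_ellP (a e E₁ E₂ : ℝ) (ha : 0 < a) (he0 : 0 ≤ e) (he1 : e < 1)
    (hE0 : 0 ≤ E₂ - E₁) (hE2 : E₂ - E₁ ≤ 2 * π) :
    ‖ellP a e E₂ - ellP a e E₁‖ =
      2 * a * Real.sin ((E₂ - E₁)/2) * Real.sqrt (1 - (e * Real.cos ((E₂ + E₁)/2))^2) := by
  have h1 : (0:ℝ) ≤ 1 - e^2 := by nlinarith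
  have hsinH : 0 ≤ Real.sin ((E₂ - E₁)/2) :=
    Real.sin_nonneg_of_nonneg_of_le_pi (by linarith) (by linarith [Real.pi_pos])
  have hs := Real.sq_sqrt h1
  have hcc := Real.cos_sub_cos E₂ E₁
  have hss := Real.sin_sub_sin E₂ E₁
  have h2 := Real.sin_sq_add_cos_sq ((E₂ + E₁)/2)
  rw [ellP, ellP, EuclideanSpace.norm_eq]
  simp only [Fin.sum_univ_two, WithLp.equiv_symm_apply, PiLp.toLp_apply, Real.norm_eq_abs, sq_abs,
    PiLp.sub_apply, Matrix.cons_val_zero, Matrix.cons_val_one, Matrix.head_cons]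
  have key : (a * (Real.cos E₂ - e) - a * (Real.cos E₁ - e)) ^ 2 +
        (a * √(1 - e ^ 2) * Real.sin E₂ - a * √(1 - e ^ 2) * Real.sin E₁) ^ 2
      = (2 * a * Real.sin ((E₂ - E₁)/2))^2 * (1 - (e * Real.cos ((E₂ + E₁)/2))^2) := by
    linear_combination
      (a^2*((Real.cos E₂ - Real.cos E₁) + (-2) * Real.sin ((E₂+E₁)/2) * Real.sin ((E₂-E₁)/2))) * hcc
      + (a^2*(√(1-e^2))^2*((Real.sin E₂ - Real.sin E₁) + 2*Real.sin ((E₂-E₁)/2)*Real.cos ((E₂+E₁)/2))) * hss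
      + (4*a^2*Real.sin ((E₂-E₁)/2)^2*Real.cos ((E₂+E₁)/2)^2) * hs
      + (4*a^2*Real.sin ((E₂-E₁)/2)^2) * h2
  rw [key, Real.sqrt_mul (sq_nonneg _),
    Real.sqrt_sq (mul_nonneg (by positivity) hsinH)]

/-- Lambert's theorem for elliptic motion. -/
theorem lambert_elliptic (a e E₁ E₂ : ℝ) (ha : 0 < a) (he0 : 0 ≤ e) (he1 : e < 1)
    (hE0 : 0 ≤ E₂ - E₁) (hE2 : E₂ - E₁ ≤ 2 * π) :
    ∃ β γ : ℝ,
      Real.sin (β / 2) ^ 2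
        = (‖ellP a e E₁‖ + ‖ellP a e E₂‖ + ‖ellP a e E₂ - ellP a e E₁‖) / (4 * a) ∧
      Real.sin (γ / 2) ^ 2
        = (‖ellP a e E₁‖ + ‖ellP a e E₂‖ - ‖ellP a e E₂ - ellP a e E₁‖) / (4 * a) ∧
      0 ≤ β - γ ∧ β - γ ≤ 2 * π ∧
      (E₂ - e * Real.sin E₂) - (E₁ - e * Real.sin E₁)
        = β - γ - (Real.sin β - Real.sin γ) := by
  set G := (E₂ + E₁)/2 with hG
  set H := (E₂ - E₁)/2 with hHdef
  have hcG1 : -1 ≤ e * Real.cos G := by nlinarith [Real.neg_one_le_cos G]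
  have hcG2 : e * Real.cos G ≤ 1 := by nlinarith [Real.cos_le_one G]
  set ε := Real.arccos (e * Real.cos G) with hε
  have hcosε : Real.cos ε = e * Real.cos G := Real.cos_arccos hcG1 hcG2
  have hsinε : Real.sin ε = Real.sqrt (1 - (e * Real.cos G)^2) := Real.sin_arccos _
  refine ⟨ε + H, ε - H, ?_, ?_, by linarith, by linarith, ?_⟩
  · rw [norm_ellP a e E₁ ha he0 he1, norm_ellP a e E₂ ha he0 he1,
      chord_ellP a e E₁ E₂ ha he0 he1 hE0 hE2, sin_half_sq, Real.cos_add, hcosε, ← hsinε]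
    have hcc : Real.cos E₁ + Real.cos E₂ = 2 * Real.cos G * Real.cos H := by
      rw [Real.cos_add_cos, show (E₁ + E₂)/2 = G by rw [hG]; ring,
        show (E₁ - E₂)/2 = -H by rw [hHdef]; ring, Real.cos_neg]
    field_simp
    linear_combination (2*e) * hcc
  · rw [norm_ellP a e E₁ ha he0 he1, norm_ellP a e E₂ ha he0 he1,
      chord_ellP a e E₁ E₂ ha he0 he1 hE0 hE2, sin_half_sq, Real.cos_sub, hcosε, ← hsinε]
    have hcc : Real.cos E₁ + Real.cos E₂ = 2 * Real.cos G * Real.cos H := by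
      rw [Real.cos_add_cos, show (E₁ + E₂)/2 = G by rw [hG]; ring,
        show (E₁ - E₂)/2 = -H by rw [hHdef]; ring, Real.cos_neg]
    field_simp
    linear_combination (2*e) * hcc
  · have hss : Real.sin E₂ - Real.sin E₁ = 2 * Real.sin H * Real.cos G := by
      rw [Real.sin_sub_sin, show (E₂ - E₁)/2 = H from rfl, show (E₂ + E₁)/2 = G from rfl]
    rw [Real.sin_add, Real.sin_sub, hcosε]
    linear_combination (-e) * hss
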